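/- Let b and c be real numbers with −1 < b < 0 and c > 0, and let z be real with −1 < z < 0. For each positive integer N define F(N) = ∑_{k=0}^{∞} (N)_k · (b)_k · z^k / ( (c)_k · k! ), where (a)_k is the rising (Pochhammer) factorial. Then F(N+1) > F(N) for every positive integer N; that is, N ↦ F(N) is strictly increasing. -/

import Mathlib

open Polynomial Filter

noncomputable def hTerm (A B C z : ℝ) (k : ℕ) : ℝ :=
  (ascPochhammer ℝ k).eval A * (ascPochhammer ℝ k).eval B * z ^ k /
    ((ascPochhammer ℝ k).eval C * (Nat.factorial k))

lemma hTerm_zero (A B C z : ℝ) : hTerm A B C z 0 = 1 := by simp [hTerm]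

lemma poch_succ_left_eval (x : ℝ) (k : ℕ) :
    (ascPochhammer ℝ (k + 1)).eval x = x * (ascPochhammer ℝ k).eval (x + 1) := by
  rw [ascPochhammer_succ_left]
  simp [Polynomial.eval_comp]

lemma poch_pos {C : ℝ} (hC : 0 < C) (k : ℕ) : 0 < (ascPochhammer ℝ k).eval C := by
  induction k with
  | zero => simp
  | succ k ih => rw [ascPochhammer_succ_eval]; exact mul_pos ih (by positivity)

lemma poch_nonneg {A : ℝ} (hA : 0 ≤ A) (k : ℕ) : 0 ≤ (ascPochhammer ℝ k).eval A := by
  induction k with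
  | zero => simp
  | succ k ih => rw [ascPochhammer_succ_eval]; exact mul_nonneg ih (by positivity)

lemma poch_abs_le {B : ℝ} (hB : |B| ≤ 1) (k : ℕ) :
    |(ascPochhammer ℝ k).eval B| ≤ (Nat.factorial k : ℝ) := by
  induction k with
  | zero => simp
  | succ k ih =>
    rw [ascPochhammer_succ_eval, abs_mul]
    have h1 : |B + (k : ℝ)| ≤ (k : ℝ) + 1 := by
      rw [abs_le] at *
      constructor <;> nlinarith [hB.1, hB.2, Nat.cast_nonneg (α := ℝ) k]
    calc |(ascPochhammer ℝ k).eval B| * |B + (k : ℝ)| ≤ (Nat.factorial k : ℝ) * ((k:ℝ)+1) :=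
          mul_le_mul ih h1 (abs_nonneg _) (by positivity)
      _ = (Nat.factorial (k+1) : ℝ) := by rw [Nat.factorial_succ]; push_cast; ring

lemma poch_lower {C : ℝ} (hC : 1 ≤ C) (k : ℕ) :
    C * (Nat.factorial (k + 1) : ℝ) ≤ (ascPochhammer ℝ (k + 1)).eval C := by
  induction k with
  | zero => simp
  | succ k ih =>
    rw [ascPochhammer_succ_eval]
    have h2 : ((k:ℝ) + 2) ≤ C + (k + 1 : ℕ) := by push_cast; linarith
    have h3 : (0:ℝ) < C * (Nat.factorial (k+1) : ℝ) := by
      have := Nat.factorial_pos (k+1); positivity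
    calc C * (Nat.factorial (k+1+1) : ℝ) = (C * (Nat.factorial (k+1):ℝ)) * ((k:ℝ)+2) := by
          rw [Nat.factorial_succ]; push_cast; ring
      _ ≤ (ascPochhammer ℝ (k+1)).eval C * (C + (k+1:ℕ)) := by
          apply mul_le_mul ih h2 (by positivity)
          exact le_trans h3.le ih
      _ = _ := rfl

lemma hTerm_succ (A B : ℝ) {C : ℝ} (z : ℝ) (hC : 0 < C) (k : ℕ) :
    hTerm A B C z (k + 1) =
      hTerm A B C z k * ((A + k) * (B + k) * z / ((C + k) * (k + 1))) := by
  have hPC := (poch_pos hC k).ne'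
  have hCk : C + (k:ℝ) ≠ 0 := by positivity
  have hf : (Nat.factorial k : ℝ) ≠ 0 := Nat.cast_ne_zero.2 (Nat.factorial_ne_zero k)
  simp only [hTerm, ascPochhammer_succ_eval, Nat.factorial_succ, pow_succ]
  push_cast
  field_simp

lemma summable_hTerm {A B C z : ℝ} (hA : 0 ≤ A) (hB : |B| ≤ 1) (hC : 0 < C)
    (hz : |z| < 1) : Summable (hTerm A B C z) := by
  set r : ℝ := (1 + |z|) / 2 with hr
  have hr1 : r < 1 := by rw [hr]; linarith
  have hrz : |z| < r := by rw [hr]; linarith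
  have hr0 : 0 < r := lt_of_le_of_lt (abs_nonneg z) hrz
  apply summable_of_ratio_norm_eventually_le hr1
  rw [eventually_atTop]
  obtain ⟨K, hK⟩ := exists_nat_gt ((A * |z|) / (r - |z|))
  refine ⟨K, fun k hk => ?_⟩
  have hkK : ((A * |z|) / (r - |z|)) < (k : ℝ) :=
    lt_of_lt_of_le hK (by exact_mod_cast hk)
  have hrz' : 0 < r - |z| := by linarith
  have key : (A + k) * |z| ≤ r * (C + k) := by
    have h1 : A * |z| ≤ (k:ℝ) * (r - |z|) := by
      rw [div_lt_iff₀ hrz'] at hkK; linarith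
    nlinarith [abs_nonneg z, hC, (Nat.cast_le (α := ℝ)).2 hk, Nat.cast_nonneg (α := ℝ) k]
  rw [hTerm_succ A B z hC k, norm_mul]
  have hB' : |B + (k:ℝ)| ≤ (k : ℝ) + 1 := by
    rw [abs_le] at *
    constructor <;> nlinarith [hB.1, hB.2, Nat.cast_nonneg (α := ℝ) k]
  have hq : ‖(A + k) * (B + k) * z / ((C + k) * (k + 1))‖ ≤ r := by
    rw [norm_div, norm_mul, norm_mul, norm_mul]
    have hden : ‖(C + (k:ℝ))‖ * ‖((k:ℝ) + 1)‖ = (C + k) * (k + 1) := by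
      rw [Real.norm_eq_abs, Real.norm_eq_abs, abs_of_pos (by positivity),
        abs_of_pos (by positivity)]
    rw [hden, div_le_iff₀ (by positivity)]
    have hAk : ‖A + (k:ℝ)‖ = A + k := by
      rw [Real.norm_eq_abs, abs_of_nonneg (by positivity)]
    rw [hAk, Real.norm_eq_abs, Real.norm_eq_abs]
    calc (A + (k:ℝ)) * |B + (k:ℝ)| * |z| ≤ (A + k) * ((k:ℝ)+1) * |z| := by
          apply mul_le_mul_of_nonneg_right _ (abs_nonneg z)
          exact mul_le_mul_of_nonneg_left hB' (by positivity)
      _ = ((A + k) * |z|) * ((k:ℝ)+1) := by ring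
      _ ≤ (r * (C + k)) * ((k:ℝ)+1) := by
          apply mul_le_mul_of_nonneg_right key (by positivity)
      _ = r * ((C + k) * ((k:ℝ)+1)) := by ring
  calc ‖hTerm A B C z k‖ * ‖(A + ↑k) * (B + ↑k) * z / ((C + ↑k) * (↑k + 1))‖
      ≤ ‖hTerm A B C z k‖ * r := mul_le_mul_of_nonneg_left hq (norm_nonneg _)
    _ = r * ‖hTerm A B C z k‖ := by ring

lemma rel_coeff (a : ℕ) {β γ : ℝ} (z : ℝ) (hγ : 0 < γ) (k : ℕ) :
    hTerm ((a:ℝ) + 1) β γ z (k + 1) - z * hTerm ((a:ℝ) + 1) β γ z k =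
      hTerm (a:ℝ) β γ z (k + 1) +
        ((γ - β) / γ) * (-z) * hTerm ((a:ℝ) + 1) β (γ + 1) z k := by
  have hPC := (poch_pos hγ k).ne'
  have hγk : γ + (k:ℝ) ≠ 0 := by positivity
  have hγ0 : γ ≠ 0 := hγ.ne'
  have hf : (Nat.factorial k : ℝ) ≠ 0 := Nat.cast_ne_zero.2 (Nat.factorial_ne_zero k)
  have hg1 : (ascPochhammer ℝ k).eval (γ + 1) =
      (ascPochhammer ℝ k).eval γ * (γ + k) / γ := by
    rw [eq_div_iff hγ0]
    have := poch_succ_left_eval γ k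
    rw [ascPochhammer_succ_eval] at this
    linarith [this]
  simp only [hTerm]
  rw [poch_succ_left_eval (a:ℝ) k]
  simp only [ascPochhammer_succ_eval, hg1, Nat.factorial_succ, pow_succ]
  push_cast
  field_simp
  ring

/-- The contiguous relation. -/
lemma rel (a : ℕ) {β γ z : ℝ} (hβ : |β| ≤ 1) (hγ : 1 ≤ γ) (hz : |z| < 1) :
    (1 - z) * ∑' k, hTerm ((a:ℝ) + 1) β γ z k =
      (∑' k, hTerm (a:ℝ) β γ z k) +
        ((γ - β) / γ) * (-z) * ∑' k, hTerm ((a:ℝ) + 1) β (γ + 1) z k := by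
  have hγ0 : (0:ℝ) < γ := lt_of_lt_of_le one_pos hγ
  have S1 : Summable (hTerm ((a:ℝ) + 1) β γ z) :=
    summable_hTerm (by positivity) hβ hγ0 hz
  have S0 : Summable (hTerm (a:ℝ) β γ z) :=
    summable_hTerm (Nat.cast_nonneg a) hβ hγ0 hz
  have S2 : Summable (hTerm ((a:ℝ) + 1) β (γ + 1) z) :=
    summable_hTerm (by positivity) hβ (by linarith) hz
  have S1' : Summable (fun k => hTerm ((a:ℝ) + 1) β γ z (k + 1)) :=
    (summable_nat_add_iff 1).2 S1
  have S0' : Summable (fun k => hTerm (a:ℝ) β γ z (k + 1)) :=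
    (summable_nat_add_iff 1).2 S0
  calc (1 - z) * ∑' k, hTerm ((a:ℝ) + 1) β γ z k
      = (∑' k, hTerm ((a:ℝ) + 1) β γ z k) - ∑' k, z * hTerm ((a:ℝ) + 1) β γ z k := by
        rw [tsum_mul_left]; ring
    _ = (1 + ∑' k, hTerm ((a:ℝ) + 1) β γ z (k + 1))
          - ∑' k, z * hTerm ((a:ℝ) + 1) β γ z k := by
        rw [Summable.tsum_eq_zero_add S1, hTerm_zero]
    _ = 1 + ∑' k, (hTerm ((a:ℝ) + 1) β γ z (k + 1) - z * hTerm ((a:ℝ) + 1) β γ z k) := by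
        rw [Summable.tsum_sub S1' (S1.mul_left z)]; ring
    _ = 1 + ∑' k, (hTerm (a:ℝ) β γ z (k + 1) +
          ((γ - β) / γ) * (-z) * hTerm ((a:ℝ) + 1) β (γ + 1) z k) := by
        rw [tsum_congr (fun k => rel_coeff a z hγ0 k)]
    _ = 1 + ((∑' k, hTerm (a:ℝ) β γ z (k + 1)) +
          ∑' k, ((γ - β) / γ) * (-z) * hTerm ((a:ℝ) + 1) β (γ + 1) z k) := by
        rw [Summable.tsum_add S0' (S2.mul_left _)]
    _ = (1 + ∑' k, hTerm (a:ℝ) β γ z (k + 1)) +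
          ((γ - β) / γ) * (-z) * ∑' k, hTerm ((a:ℝ) + 1) β (γ + 1) z k := by
        rw [tsum_mul_left]; ring
    _ = _ := by rw [Summable.tsum_eq_zero_add S0, hTerm_zero]

lemma hTerm_one_one (A z : ℝ) (k : ℕ) :
    hTerm A 1 1 z k = (ascPochhammer ℝ k).eval A * z ^ k / (Nat.factorial k) := by
  have hf : (Nat.factorial k : ℝ) ≠ 0 := Nat.cast_ne_zero.2 (Nat.factorial_ne_zero k)
  simp only [hTerm, ascPochhammer_eval_one]
  field_simp

lemma hTerm_bound {A B γ z : ℝ} (hA : 0 ≤ A) (hB : |B| ≤ 1) (hγ : 1 ≤ γ) (k : ℕ) :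
    |hTerm A B γ z (k + 1)| ≤ hTerm A 1 1 |z| (k + 1) / γ := by
  have hγ0 : (0:ℝ) < γ := lt_of_lt_of_le one_pos hγ
  have hfac : (0:ℝ) < (Nat.factorial (k+1) : ℝ) :=
    Nat.cast_pos.2 (Nat.factorial_pos _)
  have hden : (0:ℝ) < (ascPochhammer ℝ (k+1)).eval γ * (Nat.factorial (k+1) : ℝ) :=
    mul_pos (poch_pos hγ0 _) hfac
  rw [hTerm_one_one, hTerm, abs_div]
  rw [abs_of_pos hden, abs_mul, abs_mul, abs_of_nonneg (poch_nonneg hA _), abs_pow]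
  have hnum : (ascPochhammer ℝ (k+1)).eval A * |(ascPochhammer ℝ (k+1)).eval B| * |z| ^ (k+1)
      ≤ (ascPochhammer ℝ (k+1)).eval A * (Nat.factorial (k+1) : ℝ) * |z| ^ (k+1) := by
    apply mul_le_mul_of_nonneg_right _ (by positivity)
    exact mul_le_mul_of_nonneg_left (poch_abs_le hB _) (poch_nonneg hA _)
  have hden2 : γ * (Nat.factorial (k+1) : ℝ) * (Nat.factorial (k+1) : ℝ)
      ≤ (ascPochhammer ℝ (k+1)).eval γ * (Nat.factorial (k+1) : ℝ) := by
    apply mul_le_mul_of_nonneg_right _ hfac.le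
    exact poch_lower hγ k
  calc (ascPochhammer ℝ (k+1)).eval A * |(ascPochhammer ℝ (k+1)).eval B| * |z| ^ (k+1) /
        ((ascPochhammer ℝ (k+1)).eval γ * (Nat.factorial (k+1) : ℝ))
      ≤ ((ascPochhammer ℝ (k+1)).eval A * (Nat.factorial (k+1) : ℝ) * |z| ^ (k+1)) /
        (γ * (Nat.factorial (k+1) : ℝ) * (Nat.factorial (k+1) : ℝ)) := by
        have hb : (0:ℝ) ≤ (ascPochhammer ℝ (k+1)).eval A * (Nat.factorial (k+1) : ℝ) * |z| ^ (k+1) := by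
          have := poch_nonneg hA (k+1); positivity
        apply div_le_div₀ hb hnum (by positivity) hden2
    _ = (ascPochhammer ℝ (k+1)).eval A * |z| ^ (k+1) / (Nat.factorial (k+1) : ℝ) / γ := by
        field_simp
set_option maxHeartbeats 2000000 in
/-- Positivity of `₂F₁(M, β; γ; z)` for `0 < β < 1 ≤ γ`, `-1 < z < 0`. -/
lemma G_pos {β z : ℝ} (hβ0 : 0 < β) (hβ1 : β < 1) (hz0 : -1 < z) (hz1 : z < 0) :
    ∀ (M : ℕ), ∀ γ : ℝ, 1 ≤ γ → 0 < ∑' k, hTerm (M:ℝ) β γ z k := by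
  have hz : |z| < 1 := abs_lt.2 ⟨hz0, by linarith⟩
  have hβ : |β| ≤ 1 := abs_le.2 ⟨by linarith, by linarith⟩
  intro M
  induction M with
  | zero =>
    intro γ hγ
    have : ∑' k, hTerm ((0:ℕ):ℝ) β γ z k = 1 := by
      rw [tsum_eq_single 0]
      · exact hTerm_zero _ _ _ _
      · intro k hk
        obtain ⟨j, rfl⟩ := Nat.exists_eq_succ_of_ne_zero hk
        simp [hTerm, poch_succ_left_eval]
    rw [this]; exact one_pos
  | succ M IH =>
    intro γ hγ
    have hγ0 : (0:ℝ) < γ := lt_of_lt_of_le one_pos hγ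
    -- the comparison sum
    set S : ℝ := ∑' k, hTerm ((M:ℝ) + 1) 1 1 |z| k with hS
    have SU : Summable (hTerm ((M:ℝ) + 1) 1 1 |z|) :=
      summable_hTerm (by positivity) (by rw [abs_one]) one_pos (by rwa [abs_abs])
    have SU' : Summable (fun k => hTerm ((M:ℝ) + 1) 1 1 |z| (k + 1)) :=
      (summable_nat_add_iff 1).2 SU
    have hSU_nonneg : ∀ k, 0 ≤ hTerm ((M:ℝ) + 1) 1 1 |z| (k + 1) := by
      intro k
      rw [hTerm_one_one]
      have h1 := poch_nonneg (show (0:ℝ) ≤ (M:ℝ) + 1 by positivity) (k+1)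
      have h2 : (0:ℝ) < (Nat.factorial (k+1) : ℝ) := Nat.cast_pos.2 (Nat.factorial_pos _)
      positivity
    -- tail positivity
    have tail : ∀ γ' : ℝ, 1 ≤ γ' → S < γ' → 0 < ∑' k, hTerm ((M:ℝ) + 1) β γ' z k := by
      intro γ' hγ'1 hγ'S
      have hγ'0 : (0:ℝ) < γ' := lt_of_lt_of_le one_pos hγ'1
      have St : Summable (hTerm ((M:ℝ) + 1) β γ' z) :=
        summable_hTerm (by positivity) hβ hγ'0 hz
      have St' : Summable (fun k => hTerm ((M:ℝ) + 1) β γ' z (k + 1)) :=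
        (summable_nat_add_iff 1).2 St
      have habs : |∑' k, hTerm ((M:ℝ) + 1) β γ' z (k + 1)| ≤ (S - 1) / γ' := by
        have h1 : |∑' k, hTerm ((M:ℝ) + 1) β γ' z (k + 1)|
            ≤ ∑' k, |hTerm ((M:ℝ) + 1) β γ' z (k + 1)| := by
          have h := norm_tsum_le_tsum_norm
            (f := fun k => hTerm ((M:ℝ) + 1) β γ' z (k + 1))
            (by simpa [Real.norm_eq_abs] using St'.abs)
          simpa [Real.norm_eq_abs] using h
        have h2 : ∑' k, |hTerm ((M:ℝ) + 1) β γ' z (k + 1)|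
            ≤ ∑' k, hTerm ((M:ℝ) + 1) 1 1 |z| (k + 1) / γ' :=
          Summable.tsum_le_tsum (fun k => hTerm_bound (by positivity) hβ hγ'1 k)
            St'.abs (SU'.div_const _)
        have h3 : ∑' k, hTerm ((M:ℝ) + 1) 1 1 |z| (k + 1) / γ'
            = (S - 1) / γ' := by
          rw [tsum_div_const]
          congr 1
          have := Summable.tsum_eq_zero_add SU
          rw [hTerm_zero] at this
          rw [hS]; linarith
        linarith
      have hfin : ∑' k, hTerm ((M:ℝ) + 1) β γ' z k
          = 1 + ∑' k, hTerm ((M:ℝ) + 1) β γ' z (k + 1) := by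
        rw [Summable.tsum_eq_zero_add St, hTerm_zero]
      rw [hfin]
      have hS1 : (S - 1) / γ' < 1 := by
        rw [div_lt_one hγ'0]
        linarith
      have := abs_le.1 habs
      linarith [this.1]
    -- downward induction
    obtain ⟨n, hn⟩ := exists_nat_gt (S - γ)
    have descend : ∀ j : ℕ, 0 < ∑' k, hTerm ((M:ℝ) + 1) β (γ + (n - j : ℕ)) z k := by
      intro j
      induction j with
      | zero =>
        apply tail
        · simp only [Nat.sub_zero]
          have : (0:ℝ) ≤ (n:ℕ) := Nat.cast_nonneg n
          push_cast
          linarith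
        · simp only [Nat.sub_zero]
          linarith
      | succ j ihj =>
        by_cases hjn : n ≤ j
        · have : n - (j + 1) = n - j := by omega
          rw [this]; exact ihj
        · push_neg at hjn
          have hcast : ((n - j : ℕ) : ℝ) = ((n - (j+1) : ℕ) : ℝ) + 1 := by
            have : n - j = (n - (j+1)) + 1 := by omega
            rw [this]; push_cast; ring
          set γ' : ℝ := γ + ((n - (j+1) : ℕ) : ℝ) with hγ'
          have hγ'1 : 1 ≤ γ' := by
            have : (0:ℝ) ≤ ((n - (j+1) : ℕ) : ℝ) := Nat.cast_nonneg _
            rw [hγ']; linarith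
          have hrel := rel M hβ hγ'1 hz
          have hpos2 : 0 < ∑' k, hTerm ((M:ℝ) + 1) β (γ' + 1) z k := by
            have : γ' + 1 = γ + ((n - j : ℕ) : ℝ) := by rw [hγ', hcast]; ring
            rw [this]; exact ihj
          have hpos0 : 0 < ∑' k, hTerm (M:ℝ) β γ' z k := IH γ' hγ'1
          have hcoef : 0 ≤ ((γ' - β) / γ') * (-z) := by
            have hγ'0 : (0:ℝ) < γ' := lt_of_lt_of_le one_pos hγ'1
            have : 0 ≤ (γ' - β) / γ' := div_nonneg (by linarith) hγ'0.le
            have hz' : 0 ≤ -z := by linarith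
            positivity
          have hrhs : 0 < (1 - z) * ∑' k, hTerm ((M:ℝ) + 1) β γ' z k := by
            rw [hrel]
            have := mul_nonneg hcoef hpos2.le
            linarith
          have h1z : (0:ℝ) < 1 - z := by linarith
          nlinarith [hrhs]
    have := descend n
    simpa using this

/-- difference coefficient identity -/
lemma diff_coeff (N : ℕ) {b c : ℝ} (z : ℝ) (hb : b ≠ 0) (hc : 0 < c) (k : ℕ) :
    hTerm ((N:ℝ) + 1) b c z (k + 1) - hTerm (N:ℝ) b c z (k + 1) =
      (b * z / c) * hTerm ((N:ℝ) + 1) (b + 1) (c + 1) z k := by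
  have hPC := (poch_pos (show (0:ℝ) < c + 1 by linarith) k).ne'
  have hc0 : c ≠ 0 := hc.ne'
  have hf : (Nat.factorial k : ℝ) ≠ 0 := Nat.cast_ne_zero.2 (Nat.factorial_ne_zero k)
  simp only [hTerm]
  rw [poch_succ_left_eval (N:ℝ) k, poch_succ_left_eval b k, poch_succ_left_eval c k,
    ascPochhammer_succ_eval]
  simp only [Nat.factorial_succ, pow_succ]
  push_cast
  field_simp
  ring

/-- The Gaussian hypergeometric series `₂F₁(N, b, c, z)` with first argument a natural
number `N`, as a sum over `k` of `(N)_k (b)_k z^k / ((c)_k k!)`. -/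
noncomputable def hypergeomF (N : ℕ) (b c z : ℝ) : ℝ :=
  ∑' k : ℕ,
    (ascPochhammer ℝ k).eval (N : ℝ) * (ascPochhammer ℝ k).eval b * z ^ k /
      ((ascPochhammer ℝ k).eval c * (Nat.factorial k))

/-- Lemma 1 of the paper: for `−1 < b < 0`, `c > 0` and `−1 < z < 0`, the
hypergeometric series `F(N) = ∑_k (N)_k (b)_k z^k / ((c)_k k!)` is strictly increasing in
the positive integer `N`: `F(N+1) > F(N)`. -/
theorem hypergeomF_strict_mono
    (b c z : ℝ) (hb0 : -1 < b) (hb1 : b < 0) (hc : 0 < c) (hz0 : -1 < z) (hz1 : z < 0) :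
    ∀ N : ℕ, 0 < N → hypergeomF N b c z < hypergeomF (N + 1) b c z := by
  intro N _
  have hz : |z| < 1 := abs_lt.2 ⟨hz0, by linarith⟩
  have hB : |b| ≤ 1 := abs_le.2 ⟨by linarith, by linarith⟩
  have SN : Summable (hTerm (N:ℝ) b c z) := summable_hTerm (Nat.cast_nonneg N) hB hc hz
  have SN1 : Summable (hTerm ((N:ℝ) + 1) b c z) :=
    summable_hTerm (by positivity) hB hc hz
  have SG : Summable (hTerm ((N:ℝ) + 1) (b + 1) (c + 1) z) :=
    summable_hTerm (by positivity) (abs_le.2 ⟨by linarith, by linarith⟩)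
      (by linarith) hz
  have hF : hypergeomF N b c z = ∑' k, hTerm (N:ℝ) b c z k := rfl
  have hF1 : hypergeomF (N + 1) b c z = ∑' k, hTerm ((N:ℝ) + 1) b c z k := by
    simp only [hypergeomF, hTerm]
    push_cast
    rfl
  have hdiff : (∑' k, hTerm ((N:ℝ) + 1) b c z k) - (∑' k, hTerm (N:ℝ) b c z k)
      = (b * z / c) * ∑' k, hTerm ((N:ℝ) + 1) (b + 1) (c + 1) z k := by
    rw [← Summable.tsum_sub SN1 SN, Summable.tsum_eq_zero_add (SN1.sub SN)]
    have h0 : hTerm ((N:ℝ) + 1) b c z 0 - hTerm (N:ℝ) b c z 0 = 0 := by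
      rw [hTerm_zero, hTerm_zero]; ring
    rw [h0, zero_add,
      tsum_congr (fun k => diff_coeff N z hb1.ne hc k), tsum_mul_left]
  have hG := G_pos (β := b + 1) (by linarith) (by linarith) hz0 hz1 (N + 1) (c + 1)
    (by linarith)
  have hG' : 0 < ∑' k, hTerm ((N:ℝ) + 1) (b + 1) (c + 1) z k := by
    have hcast : (((N + 1 : ℕ)) : ℝ) = (N:ℝ) + 1 := by push_cast; ring
    rwa [hcast] at hG
  have hbz : 0 < b * z / c := div_pos (mul_pos_of_neg_of_neg hb1 hz1) hc
  have := mul_pos hbz hG'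
  rw [hF, hF1]
  linarith
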